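/- If span(φ₁,…,φ_n) is invariant under the linear operators L_{g_i} for i = 1,…,m and each φ_j is an eigenfunction of L_f, then for every polynomial control input u(t) and trajectory x(t), the function t ↦ (φ₁(x(t)),…,φ_n(x(t))) is continuously differentiable and its derivative at each time lies in the span of {F z(t), G₁ z(t),…,G_m z(t)} with coefficients (1, u₁(t),…,u_m(t)). -/

import Mathlib

/-- In the setting of the Koopman bilinear form theorem, for every polynomial
control input `u` and trajectory `x`, the lifted curve
`z t = (φ₁ (x t),…,φₙ (x t))` is continuously differentiable and its
derivative at each time is `1 • F z t + Σᵢ uᵢ t • Gᵢ z t`, i.e. it lies in the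
span of `{F z t, G₁ z t,…,Gₘ z t}` with coefficients `(1, u₁ t,…,uₘ t)`. -/
theorem koopman_bilinear_polynomial_input {d n m : ℕ}
    (f : (Fin d → ℝ) → (Fin d → ℝ)) (g : Fin m → (Fin d → ℝ) → (Fin d → ℝ))
    (hf : LipschitzWith 1 f) (hg : ∀ i, LipschitzWith 1 (g i))
    (p : Fin m → Polynomial ℝ) (u : ℝ → Fin m → ℝ)
    (hu : ∀ i t, u t i = (p i).eval t)
    (x : ℝ → Fin d → ℝ)
    (hx : ∀ t : ℝ, HasDerivAt x (f (x t) + ∑ i, u t i • g i (x t)) t)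
    (φ : Fin n → (Fin d → ℝ) → ℝ) (hφ : ∀ j, ContDiff ℝ 1 (φ j))
    (lam : Fin n → ℝ) (G : Fin m → Matrix (Fin n) (Fin n) ℝ)
    (hLf : ∀ j y, fderiv ℝ (φ j) y (f y) = lam j * φ j y)
    (hLg : ∀ i j y, fderiv ℝ (φ j) y (g i y) = ∑ k, G i j k * φ k y) :
    ContDiff ℝ 1 (fun t : ℝ => (fun j => φ j (x t))) ∧
    ∀ t : ℝ,
      HasDerivAt (fun s : ℝ => (fun j => φ j (x s)))
        ((1 : ℝ) • (Matrix.diagonal lam).mulVec (fun j => φ j (x t)) +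
          ∑ i, u t i • (G i).mulVec (fun j => φ j (x t))) t := by
  have key : ∀ (j : Fin n) (t : ℝ), HasDerivAt (fun s => φ j (x s))
      (lam j * φ j (x t) + ∑ i, u t i * ∑ k, G i j k * φ k (x t)) t := by
    intro j t
    have hd : HasFDerivAt (φ j) (fderiv ℝ (φ j) (x t)) (x t) :=
      ((hφ j).differentiable one_ne_zero (x t)).hasFDerivAt
    have h := hd.comp_hasDerivAt t (hx t)
    refine h.congr_deriv ?_
    rw [map_add, hLf, map_sum]
    congr 1
    refine Finset.sum_congr rfl fun i _ => ?_
    rw [ContinuousLinearMap.map_smul, hLg, smul_eq_mul]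
  have heq : ∀ t : ℝ,
      ((1 : ℝ) • (Matrix.diagonal lam).mulVec (fun j => φ j (x t)) +
        ∑ i, u t i • (G i).mulVec (fun j => φ j (x t)))
      = fun j => lam j * φ j (x t) + ∑ i, u t i * ∑ k, G i j k * φ k (x t) := by
    intro t
    funext j
    simp [Matrix.mulVec, dotProduct, Matrix.diagonal, Finset.sum_ite_eq, mul_comm]
  have hderiv : ∀ t : ℝ,
      HasDerivAt (fun s : ℝ => (fun j => φ j (x s)))
        ((1 : ℝ) • (Matrix.diagonal lam).mulVec (fun j => φ j (x t)) +
          ∑ i, u t i • (G i).mulVec (fun j => φ j (x t))) t := by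
    intro t
    rw [heq t]
    exact hasDerivAt_pi.2 fun j => key j t
  refine ⟨?_, hderiv⟩
  have hxc : Continuous x := continuous_iff_continuousAt.2 fun t => (hx t).continuousAt
  have huc : ∀ i, Continuous (fun t => u t i) := by
    intro i
    have : (fun t => u t i) = fun t => (p i).eval t := funext fun t => hu i t
    rw [this]; exact (p i).continuous
  have hzc : ∀ k, Continuous (fun t => φ k (x t)) :=
    fun k => ((hφ k).continuous).comp hxc
  rw [contDiff_one_iff_deriv]
  constructor
  · exact fun t => (hderiv t).differentiableAt
  · have : deriv (fun t : ℝ => (fun j => φ j (x t)))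
        = fun t => (fun j => lam j * φ j (x t) + ∑ i, u t i * ∑ k, G i j k * φ k (x t)) := by
      funext t
      rw [(hderiv t).deriv, heq t]
    rw [this]
    apply continuous_pi
    intro j
    exact ((continuous_const.mul (hzc j)).add (continuous_finset_sum _ fun i _ =>
      (huc i).mul (continuous_finset_sum _ fun k _ => continuous_const.mul (hzc k))))
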